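/- Let σ > 0 and X ∈ ℝ^{n×n}. For any (Z, W) ∈ ℝ^{n×n} × Range(Q), setting X⁺ := X − σ(Z + QW + G) and g(Z,W) := δ*_{𝔅_n}(Z) + ½⟨W, QW⟩, one has g(Z, W) − inf(D) ≤ (L_σ(Z, W; X) − inf_{(Z',W') ∈ ℝ^{n×n} × Range(Q)} L_σ(Z', W'; X)) + (1/(2σ))(‖X‖² − ‖X⁺‖²), where inf(D) is the optimal value of problem (D). -/

import Mathlib

open Filter Topology
open scoped RealInnerProductSpace

/-- The space `ℝ^{n×n}` of square matrices endowed with the Frobenius (Euclidean)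
inner product, realized as a Euclidean space indexed by pairs. -/
abbrev MatSp (n : ℕ) := EuclideanSpace ℝ (Fin n × Fin n)

/-- The Birkhoff polytope `𝔅ₙ` of doubly stochastic matrices. -/
def Birkhoff (n : ℕ) : Set (MatSp n) :=
  {X | (∀ i, ∑ j, X (i, j) = 1) ∧ (∀ j, ∑ i, X (i, j) = 1) ∧ ∀ q, 0 ≤ X q}

/-- The support function `δ*_{𝔅ₙ}(Z) = max_{X ∈ 𝔅ₙ} ⟨X, Z⟩` of the Birkhoff polytope. -/
noncomputable def suppB (n : ℕ) (Z : MatSp n) : ℝ :=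
  sSup ((fun X => ⟪X, Z⟫) '' Birkhoff n)

/-- The primal objective of problem (P): `f(X) = ½⟨X, QX⟩ + ⟨G, X⟩`. -/
noncomputable def objP {n : ℕ} (Q : MatSp n →ₗ[ℝ] MatSp n) (G X : MatSp n) : ℝ :=
  (1 / 2) * ⟪X, Q X⟫ + ⟪G, X⟫

/-- The feasible set of the dual problem (D): `Z + QW + G = 0`, `W ∈ Range(Q)`. -/
def feasD {n : ℕ} (Q : MatSp n →ₗ[ℝ] MatSp n) (G : MatSp n) :
    Set (MatSp n × MatSp n) :=
  {zw | zw.1 + Q zw.2 + G = 0 ∧ zw.2 ∈ LinearMap.range Q}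

/-- The dual objective `g(Z, W) = δ*_{𝔅ₙ}(Z) + ½⟨W, QW⟩`. -/
noncomputable def objD {n : ℕ} (Q : MatSp n →ₗ[ℝ] MatSp n) (zw : MatSp n × MatSp n) : ℝ :=
  suppB n zw.1 + (1 / 2) * ⟪zw.2, Q zw.2⟫

/-- The optimal solution set of problem (P). -/
noncomputable def solP {n : ℕ} (Q : MatSp n →ₗ[ℝ] MatSp n) (G : MatSp n) : Set (MatSp n) :=
  {X ∈ Birkhoff n | ∀ Y ∈ Birkhoff n, objP Q G X ≤ objP Q G Y}

/-- The optimal solution set of problem (D). -/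
noncomputable def solD {n : ℕ} (Q : MatSp n →ₗ[ℝ] MatSp n) (G : MatSp n) :
    Set (MatSp n × MatSp n) :=
  {zw ∈ feasD Q G | ∀ zw' ∈ feasD Q G, objD Q zw ≤ objD Q zw'}

/-- The augmented Lagrangian
`L_σ(Z, W; X) = δ*_{𝔅ₙ}(Z) + ½⟨W, QW⟩ − ⟨X, Z + QW + G⟩ + (σ/2)‖Z + QW + G‖²`. -/
noncomputable def augL {n : ℕ} (Q : MatSp n →ₗ[ℝ] MatSp n) (G : MatSp n) (σ : ℝ)
    (Z W X : MatSp n) : ℝ :=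
  suppB n Z + (1 / 2) * ⟪W, Q W⟫ - ⟪X, Z + Q W + G⟫ + (σ / 2) * ‖Z + Q W + G‖ ^ 2

/-- The uniform doubly stochastic matrix (all entries `1/n`). -/
noncomputable def unifM (n : ℕ) : MatSp n := WithLp.toLp 2 (fun _ => (n : ℝ)⁻¹)

lemma unifM_mem (n : ℕ) : unifM n ∈ Birkhoff n := by
  have hrow : ∀ i : Fin n, ∑ _j : Fin n, (n : ℝ)⁻¹ = 1 := by
    intro i
    have hn : (n : ℝ) ≠ 0 := Nat.cast_ne_zero.mpr i.pos.ne'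
    simp [Finset.sum_const, mul_comm]
    field_simp
  refine ⟨fun i => hrow i, fun j => hrow j, fun q => by simp only [unifM]; exact inv_nonneg.mpr (Nat.cast_nonneg n)⟩

lemma suppB_lower {n : ℕ} (Z : MatSp n) : ⟪unifM n, Z⟫ ≤ suppB n Z := by
  apply le_csSup
  · refine ⟨∑ q, |Z q|, ?_⟩
    rintro _ ⟨Y, hY, rfl⟩
    show ⟪Y, Z⟫ ≤ _
    rw [PiLp.inner_apply]
    simp only [RCLike.inner_apply, conj_trivial]
    apply Finset.sum_le_sum
    intro q _
    have h0 : 0 ≤ Y q := hY.2.2 q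
    have h1 : Y q ≤ 1 := by
      have := Finset.single_le_sum (f := fun j => Y (q.1, j))
        (fun j _ => hY.2.2 (q.1, j)) (Finset.mem_univ q.2)
      simpa [hY.1 q.1] using this
    calc Z q * Y q = Y q * Z q := mul_comm _ _
      _ ≤ Y q * |Z q| := mul_le_mul_of_nonneg_left (le_abs_self _) h0
      _ ≤ 1 * |Z q| := mul_le_mul_of_nonneg_right h1 (abs_nonneg _)
      _ = |Z q| := one_mul _
  · exact ⟨unifM n, unifM_mem n, rfl⟩

lemma augL_lower {n : ℕ} (Q : MatSp n →ₗ[ℝ] MatSp n)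
    (hsa : ∀ X Y : MatSp n, ⟪Q X, Y⟫ = ⟪X, Q Y⟫)
    (hpsd : ∀ X : MatSp n, 0 ≤ ⟪X, Q X⟫)
    (G : MatSp n) (σ : ℝ) (hσ : 0 < σ) (X Z W : MatSp n) :
    -(‖unifM n - X‖ ^ 2) / (2 * σ) - (1 / 2) * ⟪unifM n, Q (unifM n)⟫ - ⟪unifM n, G⟫
      ≤ augL Q G σ Z W X := by
  set X₀ := unifM n with hX₀
  set R := Z + Q W + G with hR
  have h1 : ⟪X₀, Z⟫ ≤ suppB n Z := suppB_lower Z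
  have h2 : ⟪X₀, Z⟫ = ⟪X₀, R⟫ - ⟪X₀, Q W⟫ - ⟪X₀, G⟫ := by
    have : Z = R - Q W - G := by rw [hR]; abel
    rw [this, inner_sub_right, inner_sub_right]
  have h3 : 0 ≤ ⟪W - X₀, Q (W - X₀)⟫ := hpsd _
  have h3' : ⟪W - X₀, Q (W - X₀)⟫
      = ⟪W, Q W⟫ - 2 * ⟪X₀, Q W⟫ + ⟪X₀, Q X₀⟫ := by
    have hc : ⟪W, Q X₀⟫ = ⟪X₀, Q W⟫ := by
      rw [← hsa W X₀, real_inner_comm]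
    rw [map_sub, inner_sub_left, inner_sub_right, inner_sub_right, hc]
    ring
  have hin : -(‖X₀ - X‖ * ‖R‖) ≤ ⟪X₀ - X, R⟫ := by
    have := abs_real_inner_le_norm (X₀ - X) R
    have := neg_abs_le ⟪X₀ - X, R⟫
    linarith [abs_real_inner_le_norm (X₀ - X) R, neg_abs_le ⟪X₀ - X, R⟫]
  have h4 : -(‖X₀ - X‖ ^ 2) / (2 * σ) ≤ ⟪X₀ - X, R⟫ + σ / 2 * ‖R‖ ^ 2 := by
    rw [div_le_iff₀ (by positivity)]
    nlinarith [sq_nonneg (‖X₀ - X‖ - σ * ‖R‖), norm_nonneg R, norm_nonneg (X₀ - X)]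
  have h5 : ⟪X₀ - X, R⟫ = ⟪X₀, R⟫ - ⟪X, R⟫ := inner_sub_left _ _ _
  rw [augL]
  rw [← hR]
  linarith

/-- The algebraic identity for the correction term. -/
lemma corr_eq {n : ℕ} (σ : ℝ) (hσ : 0 < σ) (X R : MatSp n) :
    (1 / (2 * σ)) * (‖X‖ ^ 2 - ‖X - σ • R‖ ^ 2) = ⟪X, R⟫ - σ / 2 * ‖R‖ ^ 2 := by
  have h : ‖X - σ • R‖ ^ 2 = ‖X‖ ^ 2 - 2 * (σ * ⟪X, R⟫) + σ ^ 2 * ‖R‖ ^ 2 := by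
    rw [norm_sub_sq_real, real_inner_smul_right, norm_smul, Real.norm_eq_abs,
      abs_of_pos hσ]
    ring
  rw [h]
  field_simp
  ring

/-- for any `(Z, W)` with `W ∈ Range(Q)` and `X⁺ = X − σ(Z + QW + G)`,
`g(Z, W) − inf(D) ≤ (L_σ(Z, W; X) − inf L_σ(·, ·; X)) + (1/(2σ))(‖X‖² − ‖X⁺‖²)`. -/
theorem stmt_15 (n : ℕ) (Q : MatSp n →ₗ[ℝ] MatSp n)
    (hsa : ∀ X Y : MatSp n, ⟪Q X, Y⟫ = ⟪X, Q Y⟫)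
    (hpsd : ∀ X : MatSp n, 0 ≤ ⟪X, Q X⟫)
    (G : MatSp n) (σ : ℝ) (hσ : 0 < σ)
    (X Z W : MatSp n) (hW : W ∈ LinearMap.range Q) :
    objD Q (Z, W) - sInf (objD Q '' feasD Q G)
      ≤ (augL Q G σ Z W X -
          sInf ((fun zw : MatSp n × MatSp n => augL Q G σ zw.1 zw.2 X) ''
            {zw : MatSp n × MatSp n | zw.2 ∈ LinearMap.range Q}))
        + (1 / (2 * σ)) * (‖X‖ ^ 2 - ‖X - σ • (Z + Q W + G)‖ ^ 2) := by
  set A := ((fun zw : MatSp n × MatSp n => augL Q G σ zw.1 zw.2 X) ''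
      {zw : MatSp n × MatSp n | zw.2 ∈ LinearMap.range Q}) with hA
  set B := objD Q '' feasD Q G with hB
  -- On the dual-feasible set the augmented Lagrangian equals the dual objective
  have heq : ∀ zw ∈ feasD Q G, augL Q G σ zw.1 zw.2 X = objD Q zw := by
    intro zw hzw
    rw [augL, objD, hzw.1]
    simp
  have hBne : B.Nonempty := by
    refine ⟨objD Q (-G, 0), ⟨(-G, 0), ?_, rfl⟩⟩
    exact ⟨by simp, ⟨0, map_zero Q⟩⟩
  have hsub : B ⊆ A := by
    rintro _ ⟨zw, hzw, rfl⟩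
    exact ⟨zw, hzw.2, heq zw hzw⟩
  have hAbdd : BddBelow A := by
    refine ⟨-(‖unifM n - X‖ ^ 2) / (2 * σ) - (1 / 2) * ⟪unifM n, Q (unifM n)⟫
      - ⟪unifM n, G⟫, ?_⟩
    rintro _ ⟨zw, _, rfl⟩
    exact augL_lower Q hsa hpsd G σ hσ X zw.1 zw.2
  have hinf : sInf A ≤ sInf B := csInf_le_csInf hAbdd hBne hsub
  have hcorr := corr_eq σ hσ X (Z + Q W + G)
  have hid : augL Q G σ Z W X =
      objD Q (Z, W) - ⟪X, Z + Q W + G⟫ + σ / 2 * ‖Z + Q W + G‖ ^ 2 := by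
    rw [augL, objD]
  linarith
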